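/- If B is exponentially distributed with rate λ > 0, then for every integer l, the l-th bit in the binary expansion of B satisfies Pr{B_l = 1} = 1/(e^{λ 2^l} + 1), where B_l = 1 iff B ∈ ⋃_{k≥1} [2^l(2k-1), 2^l·2k). -/

import Mathlib

open MeasureTheory ProbabilityTheory Real Set

lemma expMeasure_eq_withDensity (lam : ℝ) :
    expMeasure lam = volume.withDensity (exponentialPDF lam) := rfl

lemma expMeasure_singleton (lam : ℝ) (x : ℝ) : expMeasure lam {x} = 0 := by
  rw [expMeasure_eq_withDensity]
  exact withDensity_absolutelyContinuous volume _ (by simp)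

lemma expMeasure_Iic (lam : ℝ) (hlam : 0 < lam) {x : ℝ} (hx : 0 ≤ x) :
    expMeasure lam (Iic x) = ENNReal.ofReal (1 - Real.exp (-(lam * x))) := by
  rw [expMeasure_eq_withDensity, withDensity_apply _ measurableSet_Iic,
    lintegral_exponentialPDF_eq_antiDeriv hlam x, if_pos hx]

lemma expMeasure_Ico (lam : ℝ) (hlam : 0 < lam) {a b : ℝ} (ha : 0 ≤ a) (hab : a ≤ b) :
    expMeasure lam (Ico a b) = ENNReal.ofReal (Real.exp (-(lam * a)) - Real.exp (-(lam * b))) := by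
  haveI := isProbabilityMeasure_expMeasure hlam
  have hb : 0 ≤ b := ha.trans hab
  have hIoc : expMeasure lam (Ioc a b)
      = expMeasure lam (Iic b) - expMeasure lam (Iic a) := by
    rw [← Iic_sdiff_Iic]
    exact measure_sdiff (Iic_subset_Iic.2 hab) measurableSet_Iic.nullMeasurableSet
      (measure_ne_top _ _)
  have hIcoIoc : expMeasure lam (Ico a b) = expMeasure lam (Ioc a b) := by
    apply le_antisymm
    · calc expMeasure lam (Ico a b) ≤ expMeasure lam (Ioc a b ∪ {a}) := by
            apply measure_mono; intro x hx
            rcases eq_or_lt_of_le hx.1 with h | h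
            · exact Or.inr (by simp [h.symm])
            · exact Or.inl ⟨h, hx.2.le⟩
          _ ≤ expMeasure lam (Ioc a b) + expMeasure lam {a} := measure_union_le _ _
          _ = expMeasure lam (Ioc a b) := by rw [expMeasure_singleton]; simp
    · calc expMeasure lam (Ioc a b) ≤ expMeasure lam (Ico a b ∪ {b}) := by
            apply measure_mono; intro x hx
            rcases eq_or_lt_of_le hx.2 with h | h
            · exact Or.inr (by simp [h])
            · exact Or.inl ⟨hx.1.le, h⟩
          _ ≤ expMeasure lam (Ico a b) + expMeasure lam {b} := measure_union_le _ _
          _ = expMeasure lam (Ico a b) := by rw [expMeasure_singleton]; simp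
  rw [hIcoIoc, hIoc, expMeasure_Iic lam hlam hb, expMeasure_Iic lam hlam ha,
    ← ENNReal.ofReal_sub _ (by nlinarith [Real.exp_le_one_iff.2 (by nlinarith : -(lam*a) ≤ 0)])]
  ring_nf

theorem stmt_1 (lam : ℝ) (hlam : 0 < lam) (l : ℤ) :
    expMeasure lam {x : ℝ | Odd ⌊x / 2 ^ l⌋} =
      ENNReal.ofReal (1 / (Real.exp (lam * 2 ^ l) + 1)) := by
  set c : ℝ := 2 ^ l with hc_def
  have hc : 0 < c := by positivity
  -- reduce to nonneg part
  have hIio : expMeasure lam (Iio (0:ℝ)) = 0 := by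
    rw [expMeasure_eq_withDensity, withDensity_apply _ measurableSet_Iio]
    exact lintegral_exponentialPDF_of_nonpos le_rfl
  have hmain : expMeasure lam {x : ℝ | Odd ⌊x / c⌋}
      = expMeasure lam ({x : ℝ | Odd ⌊x / c⌋} ∩ Ici 0) :=
    (measure_inter_conull (by rwa [compl_Ici])).symm
  -- the set equality
  have hset : {x : ℝ | Odd ⌊x / c⌋} ∩ Ici 0
      = ⋃ k : ℕ, Ico ((2 * (k:ℝ) + 1) * c) ((2 * (k:ℝ) + 2) * c) := by
    ext x
    simp only [mem_inter_iff, mem_setOf_eq, mem_Ici, mem_iUnion, mem_Ico]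
    constructor
    · rintro ⟨⟨n, hn⟩, hx0⟩
      have hfl : (0:ℤ) ≤ ⌊x / c⌋ := Int.floor_nonneg.2 (div_nonneg hx0 hc.le)
      have hn0 : 0 ≤ n := by omega
      refine ⟨n.toNat, ?_, ?_⟩
      · have h1 : ((2*n+1 : ℤ) : ℝ) ≤ x / c := by
          rw [← hn]; exact_mod_cast Int.floor_le (x / c)
        rw [← le_div_iff₀ hc]
        have hnt : (n.toNat : ℝ) = (n : ℝ) := by exact_mod_cast Int.toNat_of_nonneg hn0
        calc 2 * (n.toNat : ℝ) + 1 = ((2*n+1 : ℤ) : ℝ) := by rw [hnt]; push_cast; ring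
          _ ≤ x / c := h1
      · have h2 : x / c < ((2*n+1 : ℤ) : ℝ) + 1 := by
          rw [← hn]; exact_mod_cast Int.lt_floor_add_one (x / c)
        rw [← div_lt_iff₀ hc]
        have hnt : (n.toNat : ℝ) = (n : ℝ) := by exact_mod_cast Int.toNat_of_nonneg hn0
        calc x / c < ((2*n+1 : ℤ) : ℝ) + 1 := h2
          _ = 2 * (n.toNat : ℝ) + 2 := by rw [hnt]; push_cast; ring
    · rintro ⟨k, h1, h2⟩
      have h1' : (2 * (k:ℝ) + 1) ≤ x / c := (le_div_iff₀ hc).2 h1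
      have h2' : x / c < 2 * (k:ℝ) + 2 := (div_lt_iff₀ hc).2 h2
      have hfloor : ⌊x / c⌋ = 2 * (k:ℤ) + 1 := by
        rw [Int.floor_eq_iff]
        constructor
        · push_cast; linarith
        · push_cast; linarith
      refine ⟨⟨k, by omega⟩, ?_⟩
      have : (0:ℝ) ≤ (2 * (k:ℝ) + 1) * c := by positivity
      linarith
  rw [hmain, hset]
  -- disjoint union
  have hdisj : Pairwise (Function.onFun Disjoint
      fun k : ℕ => Ico ((2 * (k:ℝ) + 1) * c) ((2 * (k:ℝ) + 2) * c)) := by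
    intro i j hij
    rw [Function.onFun, Set.Ico_disjoint_Ico]
    rcases lt_or_gt_of_ne hij with h | h
    · refine le_trans (min_le_left _ _) (le_trans ?_ (le_max_right _ _))
      have : (2 * (i:ℝ) + 2) ≤ 2 * (j:ℝ) + 1 := by
        have : (i:ℝ) + 1 ≤ (j:ℝ) := by exact_mod_cast h
        linarith
      nlinarith
    · refine le_trans (min_le_right _ _) (le_trans ?_ (le_max_left _ _))
      have : (2 * (j:ℝ) + 2) ≤ 2 * (i:ℝ) + 1 := by
        have : (j:ℝ) + 1 ≤ (i:ℝ) := by exact_mod_cast h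
        linarith
      nlinarith
  rw [measure_iUnion hdisj (fun k => measurableSet_Ico)]
  -- each interval's measure
  have hterm : ∀ k : ℕ, expMeasure lam (Ico ((2 * (k:ℝ) + 1) * c) ((2 * (k:ℝ) + 2) * c))
      = ENNReal.ofReal (Real.exp (-(lam*c)) ^ (2*k+1) - Real.exp (-(lam*c)) ^ (2*k+2)) := by
    intro k
    rw [expMeasure_Ico lam hlam (by positivity) (by nlinarith)]
    congr 1
    rw [← Real.exp_nat_mul, ← Real.exp_nat_mul]
    push_cast
    ring_nf
  simp only [hterm]
  -- sum the geometric series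
  set q : ℝ := Real.exp (-(lam * c)) with hq_def
  have hq0 : 0 < q := Real.exp_pos _
  have hq1 : q < 1 := Real.exp_lt_one_iff.2 (by nlinarith)
  have hfq : ∀ k : ℕ, q ^ (2*k+1) - q ^ (2*k+2) = (q - q^2) * (q^2)^k := by
    intro k
    rw [pow_add, pow_add, pow_mul]
    ring
  have hnonneg : ∀ k : ℕ, 0 ≤ q ^ (2*k+1) - q ^ (2*k+2) := by
    intro k
    rw [hfq k]
    apply mul_nonneg (by nlinarith) (by positivity)
  have hsummable : Summable (fun k : ℕ => q ^ (2*k+1) - q ^ (2*k+2)) := by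
    simp only [hfq]
    exact (summable_geometric_of_lt_one (by positivity) (by nlinarith)).mul_left _
  rw [← ENNReal.ofReal_tsum_of_nonneg hnonneg hsummable]
  congr 1
  have : ∑' k : ℕ, (q ^ (2*k+1) - q ^ (2*k+2)) = (q - q^2) * (1 - q^2)⁻¹ := by
    simp only [hfq]
    rw [tsum_mul_left, tsum_geometric_of_lt_one (by positivity) (by nlinarith)]
  rw [this]
  have he : Real.exp (lam * c) * q = 1 := by
    rw [hq_def, ← Real.exp_add]; simp
  have h1q2 : (0:ℝ) < 1 - q^2 := by nlinarith
  have hE : 0 < Real.exp (lam * c) := Real.exp_pos _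
  have hne : (1:ℝ) - q^2 ≠ 0 := h1q2.ne'
  have hne2 : Real.exp (lam * c) + 1 ≠ 0 := by positivity
  field_simp
  linear_combination ((1 - q) * (1 - q^2) + (1-q)*q^2) * he
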